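/- Under Assumptions B, let u : [0,∞) → H be the continuously differentiable function with u(t) ∈ B(y, R) and F(u(t)) = h + e^{−t}·v₀ for all t ≥ 0. Then the derivative satisfies the decay estimate ‖u'(t)‖ ≤ (m·r/(1−q))·e^{−t} for all t ≥ 0. -/

import Mathlib

open Metric Set Filter

theorem stmt_7
    {H : Type*} [NormedAddCommGroup H] [InnerProductSpace ℝ H] [CompleteSpace H]
    (F : H → H) (F' : H → H →L[ℝ] H) (y f : H) (R m q : ℝ)
    (hf : F y = f) (hR : 0 < R)
    (hdiff : ∀ u ∈ closedBall y R, HasFDerivAt F (F' u) u)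
    (Q : H →L[ℝ] H)
    (hQl : Q.comp (F' y) = ContinuousLinearMap.id ℝ H)
    (hQr : (F' y).comp Q = ContinuousLinearMap.id ℝ H)
    (hm : 0 < m) (hQm : ‖Q‖ ≤ m)
    (ω : ℝ → ℝ)
    (hωcont : ContinuousOn ω (Icc 0 (2 * R)))
    (hωmono : StrictMonoOn ω (Icc 0 (2 * R)))
    (hω0 : ω 0 = 0)
    (hωF : ∀ u ∈ closedBall y R, ∀ v ∈ closedBall y R, ‖F' u - F' v‖ ≤ ω ‖u - v‖)
    (hq : m * ω R = q) (hq0 : 0 < q) (hq1 : q < 1)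
    (ρ : ℝ) (hρ : ρ = (1 - q) * R / m)
    (u₀ h : H) (v₀ : H) (hv₀ : v₀ = F u₀ - h)
    (r δ : ℝ) (hr : r = ‖v₀‖) (hδ : ‖h - f‖ ≤ δ) (hδr : δ + r ≤ ρ)
    (u : ℝ → H)
    (hu : ∀ t : ℝ, 0 ≤ t → u t ∈ closedBall y R ∧ F (u t) = h + Real.exp (-t) • v₀)
    (u' : ℝ → H)
    (huderiv : ∀ t ∈ Ici (0:ℝ), HasDerivWithinAt u (u' t) (Ici 0) t)
    (hu'cont : ContinuousOn u' (Ici 0)) :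
    ∀ t : ℝ, 0 ≤ t → ‖u' t‖ ≤ m * r / (1 - q) * Real.exp (-t) := by
  intro t ht
  have htI : t ∈ Ici (0:ℝ) := ht
  set a := u' t with ha
  have hut := hu t ht
  -- derivative of F ∘ u within Ici 0
  have hd1 : HasDerivWithinAt (fun s => F (u s)) ((F' (u t)) a) (Ici 0) t :=
    (hdiff (u t) hut.1).comp_hasDerivWithinAt t (huderiv t htI)
  have hd2 : HasDerivWithinAt (fun s : ℝ => h + Real.exp (-s) • v₀)
      ((-Real.exp (-t)) • v₀) (Ici 0) t := by
    have he : HasDerivAt (fun s : ℝ => Real.exp (-s)) (-Real.exp (-t)) t := by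
      have := (Real.hasDerivAt_exp (-t)).comp t (hasDerivAt_neg t)
      simpa [Function.comp_def] using this
    simpa using ((he.smul_const v₀).const_add h).hasDerivWithinAt
  have hd1' : HasDerivWithinAt (fun s : ℝ => h + Real.exp (-s) • v₀)
      ((F' (u t)) a) (Ici 0) t := by
    refine hd1.congr (fun x hx => ?_) hut.2.symm
    exact (hu x hx).2.symm
  have hUD : UniqueDiffWithinAt ℝ (Ici (0:ℝ)) t := uniqueDiffOn_Ici 0 t htI
  have heq : (F' (u t)) a = (-Real.exp (-t)) • v₀ := by
    rw [← hd1'.derivWithin hUD, hd2.derivWithin hUD]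
  -- solve for a via Q
  have hQa : Q ((F' y) a) = a := by
    have := ContinuousLinearMap.ext_iff.mp hQl a
    simpa using this
  have hsplit : a = Q ((F' (u t)) a) - Q (((F' (u t)) - (F' y)) a) := by
    rw [← map_sub]
    simp [ContinuousLinearMap.sub_apply, hQa]
  have hexp : (0:ℝ) < Real.exp (-t) := Real.exp_pos _
  have hr0 : 0 ≤ r := hr ▸ norm_nonneg v₀
  have h1 : ‖Q ((F' (u t)) a)‖ ≤ m * (Real.exp (-t) * r) := by
    rw [heq]
    calc ‖Q ((-Real.exp (-t)) • v₀)‖ ≤ ‖Q‖ * ‖(-Real.exp (-t)) • v₀‖ := Q.le_opNorm _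
      _ = ‖Q‖ * (Real.exp (-t) * r) := by
          rw [norm_smul, hr, Real.norm_eq_abs, abs_neg, abs_of_pos hexp]
      _ ≤ m * (Real.exp (-t) * r) := by
          have : 0 ≤ Real.exp (-t) * r := by positivity
          exact mul_le_mul_of_nonneg_right hQm this
  have hyB : y ∈ closedBall y R := mem_closedBall_self hR.le
  have hd : ‖u t - y‖ ≤ R := by
    have := hut.1
    rwa [mem_closedBall_iff_norm] at this
  have hωle : ω ‖u t - y‖ ≤ ω R := by
    rcases eq_or_lt_of_le hd with hE | hE
    · rw [hE]
    · exact le_of_lt (hωmono ⟨norm_nonneg _, by linarith⟩ ⟨hR.le, by linarith⟩ hE)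
  have h2 : ‖Q (((F' (u t)) - (F' y)) a)‖ ≤ q * ‖a‖ := by
    calc ‖Q (((F' (u t)) - (F' y)) a)‖ ≤ ‖Q‖ * ‖((F' (u t)) - (F' y)) a‖ := Q.le_opNorm _
      _ ≤ ‖Q‖ * (‖(F' (u t)) - (F' y)‖ * ‖a‖) :=
          mul_le_mul_of_nonneg_left (ContinuousLinearMap.le_opNorm _ _) (norm_nonneg Q)
      _ ≤ m * (ω R * ‖a‖) := by
          have hFd : ‖(F' (u t)) - (F' y)‖ ≤ ω R :=
            le_trans (hωF (u t) hut.1 y hyB) hωle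
          have h0 : 0 ≤ ‖(F' (u t)) - (F' y)‖ * ‖a‖ := by positivity
          refine le_trans (mul_le_mul_of_nonneg_right hQm h0) ?_
          exact mul_le_mul_of_nonneg_left
            (mul_le_mul_of_nonneg_right hFd (norm_nonneg a)) hm.le
      _ = q * ‖a‖ := by rw [← hq]; ring
  have hnorm : ‖a‖ ≤ m * (Real.exp (-t) * r) + q * ‖a‖ := by
    calc ‖a‖ = ‖Q ((F' (u t)) a) - Q (((F' (u t)) - (F' y)) a)‖ := by rw [← hsplit]
      _ ≤ ‖Q ((F' (u t)) a)‖ + ‖Q (((F' (u t)) - (F' y)) a)‖ := norm_sub_le _ _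
      _ ≤ m * (Real.exp (-t) * r) + q * ‖a‖ := add_le_add h1 h2
  rw [div_mul_eq_mul_div, le_div_iff₀ (by linarith)]
  nlinarith [norm_nonneg a]
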